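/- Let α ≥ 0 be a real number. If k^α is a nonnegative integer for every positive integer k, then α is a nonnegative integer. -/

import Mathlib

open Filter

private def dfwd (f : ℝ → ℝ) : ℝ → ℝ := fun x => f (x + 1) - f x

private def iterDiff : ℕ → (ℝ → ℝ) → (ℝ → ℝ)
  | 0, f => f
  | (m + 1), f => iterDiff m (dfwd f)

private lemma mvt_iter : ∀ (m : ℕ) (f : ℕ → ℝ → ℝ),
    (∀ i < m, ∀ x : ℝ, 0 < x → HasDerivAt (f i) (f (i + 1) x) x) →
    ∀ x : ℝ, 1 ≤ x → ∃ ξ : ℝ, x ≤ ξ ∧ ξ ≤ x + m ∧ iterDiff m (f 0) x = f m ξ := by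
  intro m
  induction m with
  | zero => intro f _ x hx; exact ⟨x, le_refl x, by simp, rfl⟩
  | succ m ih =>
    intro f hf x hx
    have hside : ∀ i < m, ∀ y : ℝ, 0 < y → HasDerivAt (dfwd (f i)) (dfwd (f (i + 1)) y) y := by
      intro i hi y hy
      have h1 : HasDerivAt (fun t => f i (t + 1)) (f (i + 1) (y + 1)) y := by
        have := (hf i (Nat.lt_succ_of_lt hi) (y + 1) (by linarith)).comp y
          ((hasDerivAt_id y).add_const 1)
        simpa [Function.comp_def] using this
      exact (h1.sub (hf i (Nat.lt_succ_of_lt hi) y hy))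
    obtain ⟨ξ, hxξ, hξx, hval⟩ := ih (fun i => dfwd (f i)) hside x hx
    · have hξ1 : (1 : ℝ) ≤ ξ := le_trans hx hxξ
      have hcont : ContinuousOn (f m) (Set.Icc ξ (ξ + 1)) := by
        intro t ht
        exact ((hf m (Nat.lt_succ_self m) t (lt_of_lt_of_le one_pos
          (le_trans hξ1 ht.1))).continuousAt).continuousWithinAt
      obtain ⟨η, hη, hslope⟩ := exists_hasDerivAt_eq_slope (f m) (f (m + 1))
        (by linarith : ξ < ξ + 1) hcont
        (fun t ht => hf m (Nat.lt_succ_self m) t (lt_of_lt_of_le one_pos (le_trans hξ1 ht.1.le)))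
      refine ⟨η, le_trans hxξ hη.1.le, ?_, ?_⟩
      · push_cast; linarith [hη.2]
      · have : iterDiff (m + 1) (f 0) x = iterDiff m (dfwd (f 0)) x := rfl
        rw [this, hval]
        have : f (m + 1) η = (f m (ξ + 1) - f m ξ) / (ξ + 1 - ξ) := hslope
        rw [dfwd, this]
        field_simp
        ring

private lemma iterDiff_int : ∀ (m : ℕ) (g : ℝ → ℝ),
    (∀ j : ℕ, 1 ≤ j → ∃ z : ℤ, g j = z) →
    ∀ k : ℕ, 1 ≤ k → ∃ z : ℤ, iterDiff m g k = z := by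
  intro m
  induction m with
  | zero => intro g hg k hk; exact hg k hk
  | succ m ih =>
    intro g hg k hk
    refine ih (dfwd g) ?_ k hk
    intro j hj
    obtain ⟨z1, hz1⟩ := hg (j + 1) (by omega)
    obtain ⟨z2, hz2⟩ := hg j hj
    refine ⟨z1 - z2, ?_⟩
    have : ((j : ℝ) + 1) = ((j + 1 : ℕ) : ℝ) := by push_cast; ring
    rw [dfwd, this, hz1, hz2]
    push_cast; ring

/-- Putnam 1971 A-6: if `k^α` is a nonnegative integer for every positive
integer `k`, then `α` is a nonnegative integer. -/
theorem rpow_nat_forces_nat (α : ℝ) (hα : 0 ≤ α)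
    (h : ∀ k : ℕ, 0 < k → ∃ m : ℕ, (k : ℝ) ^ α = m) :
    ∃ m : ℕ, α = m := by
  by_contra hcon
  push_neg at hcon
  set n : ℕ := ⌊α⌋₊ with hn
  set m : ℕ := n + 1 with hm
  set c : ℝ := ∏ j ∈ Finset.range m, (α - j) with hc
  have hcne : c ≠ 0 := by
    rw [hc]
    apply Finset.prod_ne_zero_iff.mpr
    intro j _
    intro hj0
    exact hcon j (by linarith [sub_eq_zero.mp hj0])
  have hαm : α - m < 0 := by
    have := Nat.lt_floor_add_one α
    push_cast [hm]
    push_cast at this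
    linarith
  -- the family of derivatives
  set f : ℕ → ℝ → ℝ := fun i x => (∏ j ∈ Finset.range i, (α - j)) * x ^ (α - i) with hf
  have hderiv : ∀ i < m, ∀ x : ℝ, 0 < x → HasDerivAt (f i) (f (i + 1) x) x := by
    intro i _ x hx
    have h1 : HasDerivAt (fun t : ℝ => t ^ (α - i)) ((α - i) * x ^ (α - i - 1)) x :=
      Real.hasDerivAt_rpow_const (Or.inl (ne_of_gt hx))
    have h2 := h1.const_mul (∏ j ∈ Finset.range i, (α - j))
    have : (∏ j ∈ Finset.range i, (α - j)) * ((α - i) * x ^ (α - i - 1)) =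
        (∏ j ∈ Finset.range (i + 1), (α - j)) * x ^ (α - (i + 1 : ℕ)) := by
      rw [Finset.prod_range_succ]
      push_cast
      have : α - ↑i - 1 = α - (↑i + 1) := by ring
      rw [this]; ring
    rw [hf]
    simpa [this] using h2
  -- choose large k
  have htend : Tendsto (fun k : ℕ => |c| * (k : ℝ) ^ (α - m)) atTop (nhds 0) := by
    have h0 : Tendsto (fun x : ℝ => x ^ (α - m)) atTop (nhds 0) := by
      have := tendsto_rpow_neg_atTop (y := (m : ℝ) - α) (by linarith)
      simpa [neg_sub] using this
    have h1 : Tendsto (fun k : ℕ => (k : ℝ)) atTop atTop :=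
      tendsto_natCast_atTop_atTop
    have := (h0.comp h1).const_mul |c|
    simpa [mul_zero] using this
  obtain ⟨k, hk1, hksmall⟩ : ∃ k : ℕ, 1 ≤ k ∧ |c| * (k : ℝ) ^ (α - m) < 1 := by
    have := (htend.eventually (eventually_lt_nhds (show (0:ℝ) < 1 by norm_num))).and
      (eventually_ge_atTop 1)
    obtain ⟨k, hk⟩ := this.exists
    exact ⟨k, hk.2, hk.1⟩
  have hk1' : (1 : ℝ) ≤ (k : ℝ) := by exact_mod_cast hk1
  -- apply MVT lemma
  obtain ⟨ξ, hkξ, hξk, hval⟩ := mvt_iter m f hderiv k hk1'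
  have hξpos : (0 : ℝ) < ξ := lt_of_lt_of_le one_pos (le_trans hk1' hkξ)
  -- integrality
  have hintside : ∀ j : ℕ, 1 ≤ j → ∃ z : ℤ, f 0 j = z := by
    intro j hj
    obtain ⟨mj, hmj⟩ := h j hj
    refine ⟨(mj : ℤ), ?_⟩
    rw [hf]
    simp [hmj]
  obtain ⟨z, hz⟩ := iterDiff_int m (f 0) hintside k hk1
  · -- the value is c * ξ ^ (α - m)
    have hvz : (z : ℝ) = c * ξ ^ (α - m) := by rw [← hz, hval, hf]
    have hzne : (z : ℝ) ≠ 0 := by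
      rw [hvz]
      exact mul_ne_zero hcne (ne_of_gt (Real.rpow_pos_of_pos hξpos _))
    have habs : |(z : ℝ)| < 1 := by
      rw [hvz, abs_mul, abs_of_pos (Real.rpow_pos_of_pos hξpos _)]
      calc |c| * ξ ^ (α - m) ≤ |c| * (k : ℝ) ^ (α - m) := by
            apply mul_le_mul_of_nonneg_left _ (abs_nonneg c)
            exact Real.rpow_le_rpow_of_nonpos (by linarith) hkξ hαm.le
        _ < 1 := hksmall
    have : z = 0 := by
      refine Int.abs_lt_one_iff.mp ?_
      have h1 : ((|z| : ℤ) : ℝ) < 1 := by rw [Int.cast_abs]; exact habs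
      exact_mod_cast h1
    exact hzne (by rw [this]; norm_num)
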